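/- Suppose H, ρ : (t₋, T) → ℝ are differentiable with H > 0, ρ > 0, ρ' = −3 H ρ g where g(t) → ξ₁ ≠ 0 as t → t₋, and let a satisfy a' = aH, a > 0. If moreover g is bounded between positive constants on (t₋, T) and ρ(t) → ∞ as t → t₋, then a(t) → 0 as t → t₋; more precisely, for every ε > 0 there is T' such that a(t) ≤ C (1/ρ(t))^{1/(3(ξ₁+ε))} on (t₋, T') for some constant C > 0. -/

import Mathlib

open Set Filter Topology

/-- If `ρ' = −3Hρg` with `g → ξ₁ ≠ 0` as `t → t₋⁺`, `g` bounded between positive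
constants, `a' = aH`, `H, ρ, a > 0` on `(t₋, T)`, and `ρ → ∞` as `t → t₋⁺`, then
`a → 0` as `t → t₋⁺`; more precisely, for every `ε > 0` there are `T'` and `C > 0`
with `a t ≤ C (1/ρ t)^{1/(3(ξ₁+ε))}` on `(t₋, T')`. -/
theorem scale_factor_vanishes_of_density_blowup (tm T : ℝ) (htm : tm < T)
    (H ρ a g : ℝ → ℝ) (ξ₁ : ℝ) (hξ₁ : ξ₁ ≠ 0)
    (hHpos : ∀ t ∈ Set.Ioo tm T, 0 < H t)
    (hρpos : ∀ t ∈ Set.Ioo tm T, 0 < ρ t)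
    (hapos : ∀ t ∈ Set.Ioo tm T, 0 < a t)
    (hρ : ∀ t ∈ Set.Ioo tm T, HasDerivAt ρ (-3 * H t * ρ t * g t) t)
    (ha : ∀ t ∈ Set.Ioo tm T, HasDerivAt a (a t * H t) t)
    (hglim : Filter.Tendsto g (nhdsWithin tm (Set.Ioi tm)) (nhds ξ₁))
    (hgbdd : ∃ m M : ℝ, 0 < m ∧ ∀ t ∈ Set.Ioo tm T, m ≤ g t ∧ g t ≤ M)
    (hρblow : Filter.Tendsto ρ (nhdsWithin tm (Set.Ioi tm)) Filter.atTop) :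
    Filter.Tendsto a (nhdsWithin tm (Set.Ioi tm)) (nhds 0) ∧
    ∀ ε > (0 : ℝ), ∃ T' ∈ Set.Ioc tm T, ∃ C > (0 : ℝ),
      ∀ t ∈ Set.Ioo tm T', a t ≤ C * (1 / ρ t) ^ (1 / (3 * (ξ₁ + ε))) := by
  obtain ⟨m, M, hm, hbd⟩ := hgbdd
  have hIooT : Set.Ioo tm T ∈ nhdsWithin tm (Set.Ioi tm) :=
    Ioo_mem_nhdsGT_of_mem ⟨le_refl tm, htm⟩
  -- ξ₁ ≥ m > 0
  have hξpos : 0 < ξ₁ := by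
    have hev : ∀ᶠ t in nhdsWithin tm (Set.Ioi tm), m ≤ g t := by
      filter_upwards [hIooT] with t ht using (hbd t ht).1
    exact lt_of_lt_of_le hm (ge_of_tendsto hglim hev)
  -- Key quantitative claim
  have key : ∀ ε > (0 : ℝ), ∃ T' ∈ Set.Ioc tm T, ∃ C > (0 : ℝ),
      ∀ t ∈ Set.Ioo tm T', a t ≤ C * (1 / ρ t) ^ (1 / (3 * (ξ₁ + ε))) := by
    intro ε hε
    have hξε : 0 < ξ₁ + ε := by linarith
    set c : ℝ := 1 / (3 * (ξ₁ + ε)) with hc_def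
    have hc : 0 < c := by positivity
    -- eventually g t < ξ₁ + ε on a right neighbourhood
    have hev : {t | g t < ξ₁ + ε} ∈ nhdsWithin tm (Set.Ioi tm) :=
      hglim (Iio_mem_nhds (by linarith))
    obtain ⟨u, hu, hsub⟩ := mem_nhdsGT_iff_exists_Ioo_subset.1 hev
    set T'' : ℝ := min u T with hT''_def
    have hT''tm : tm < T'' := lt_min hu htm
    have hT''T : T'' ≤ T := min_le_right _ _
    have hsubT : Set.Ioo tm T'' ⊆ Set.Ioo tm T := fun t ht =>
      ⟨ht.1, lt_of_lt_of_le ht.2 hT''T⟩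
    have hglt : ∀ t ∈ Set.Ioo tm T'', g t < ξ₁ + ε := fun t ht =>
      hsub ⟨ht.1, lt_of_lt_of_le ht.2 (min_le_left _ _)⟩
    set F : ℝ → ℝ := fun t => Real.log (a t) + c * Real.log (ρ t) with hF_def
    have hF : ∀ t ∈ Set.Ioo tm T'', HasDerivAt F (H t * (1 - 3 * c * g t)) t := by
      intro t ht
      have htT := hsubT ht
      have h1 : HasDerivAt (fun s => Real.log (a s)) ((a t * H t) / a t) t :=
        (ha t htT).log (hapos t htT).ne'
      have h2 : HasDerivAt (fun s => c * Real.log (ρ s))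
          (c * ((-3 * H t * ρ t * g t) / ρ t)) t :=
        ((hρ t htT).log (hρpos t htT).ne').const_mul c
      have := h1.add h2
      refine this.congr_deriv ?_
      have hane : a t ≠ 0 := (hapos t htT).ne'
      have hρne : ρ t ≠ 0 := (hρpos t htT).ne'
      field_simp
      ring
    have hFpos : ∀ t ∈ Set.Ioo tm T'', 0 < H t * (1 - 3 * c * g t) := by
      intro t ht
      have htT := hsubT ht
      have h3c : 3 * c = 1 / (ξ₁ + ε) := by
        rw [hc_def]; field_simp
      have : 3 * c * g t < 1 := by
        rw [h3c]
        rw [div_mul_eq_mul_div, div_lt_one hξε, one_mul]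
        exact hglt t ht
      exact mul_pos (hHpos t htT) (by linarith)
    have hmono : MonotoneOn F (Set.Ioo tm T'') := by
      refine (strictMonoOn_of_deriv_pos (convex_Ioo tm T'') ?_ ?_).monotoneOn
      · intro t ht
        exact ((hF t ht).continuousAt).continuousWithinAt
      · intro t ht
        rw [interior_Ioo] at ht
        rw [(hF t ht).deriv]
        exact hFpos t ht
    set t₀ : ℝ := (tm + T'') / 2 with ht₀_def
    have ht₀ : t₀ ∈ Set.Ioo tm T'' := ⟨by linarith, by linarith⟩
    have ht₀T := hsubT ht₀
    refine ⟨t₀, ⟨ht₀.1, le_of_lt (lt_of_lt_of_le ht₀.2 hT''T)⟩,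
      a t₀ * ρ t₀ ^ c, ?_, ?_⟩
    · have := hapos t₀ ht₀T
      have := hρpos t₀ ht₀T
      positivity
    · intro t ht
      have htT'' : t ∈ Set.Ioo tm T'' := ⟨ht.1, lt_trans ht.2 ht₀.2⟩
      have htT := hsubT htT''
      have hFle : F t ≤ F t₀ := hmono htT'' ht₀ (le_of_lt ht.2)
      have hρt := hρpos t htT
      have hat := hapos t htT
      have hρt₀ := hρpos t₀ ht₀T
      have hat₀ := hapos t₀ ht₀T
      have hRHS : 0 < a t₀ * ρ t₀ ^ c * (1 / ρ t) ^ c := by positivity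
      rw [← Real.log_le_log_iff hat hRHS]
      have hlog : Real.log (a t₀ * ρ t₀ ^ c * (1 / ρ t) ^ c)
          = Real.log (a t₀) + c * Real.log (ρ t₀) - c * Real.log (ρ t) := by
        rw [Real.log_mul (by positivity) (by positivity),
          Real.log_mul (by positivity) (by positivity),
          Real.log_rpow hρt₀, Real.log_rpow (by positivity),
          one_div, Real.log_inv]
        ring
      rw [hlog]
      have : Real.log (a t) + c * Real.log (ρ t)
          ≤ Real.log (a t₀) + c * Real.log (ρ t₀) := hFle
      linarith
  refine ⟨?_, key⟩
  -- a → 0 : use key with ε = ξ₁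
  obtain ⟨T', hT', C, hC, hbound⟩ := key ξ₁ hξpos
  set c : ℝ := 1 / (3 * (ξ₁ + ξ₁)) with hc_def
  have hc : 0 < c := by positivity
  have hIooT' : Set.Ioo tm T' ∈ nhdsWithin tm (Set.Ioi tm) :=
    Ioo_mem_nhdsGT_of_mem ⟨le_refl tm, hT'.1⟩
  have hRHS0 : Tendsto (fun t => C * (1 / ρ t) ^ c) (nhdsWithin tm (Set.Ioi tm)) (nhds 0) := by
    have h1 : Tendsto (fun t => (ρ t) ^ c) (nhdsWithin tm (Set.Ioi tm)) atTop :=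
      (tendsto_rpow_atTop hc).comp hρblow
    have h2 : Tendsto (fun t => ((ρ t) ^ c)⁻¹) (nhdsWithin tm (Set.Ioi tm)) (nhds 0) :=
      h1.inv_tendsto_atTop
    have h3 : Tendsto (fun t => (1 / ρ t) ^ c) (nhdsWithin tm (Set.Ioi tm)) (nhds 0) := by
      refine h2.congr' ?_
      filter_upwards [hIooT] with t ht
      rw [one_div, Real.inv_rpow (hρpos t ht).le]
    have := h3.const_mul C
    simpa using this
  refine squeeze_zero' ?_ ?_ hRHS0
  · filter_upwards [hIooT] with t ht using (hapos t ht).le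
  · filter_upwards [hIooT'] with t ht using hbound t ht
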